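/- Reachability certificate soundness: Let X, X_I, X_G ⊆ ℝⁿ with X_I ⊆ X and X_G ⊆ X, and let V : ℝⁿ → ℝ, δ > 0 with δ > -inf_{x∈X_I} V(x). Suppose (i) V(x) ≤ 0 for all x ∈ X_I, (ii) V(x) > -δ for all x ∈ X \ X_G, (iii) V(x) > 0 for all x ∉ X. Let x : ℕ → ℝⁿ be a trajectory with x(0) ∈ X_I, let T ∈ ℕ₊, define k_G = min{k ≤ T : V(x(k)) ≤ -δ} if such k exists, else k_G = T, and suppose V(x(k+1)) - V(x(k)) < -(1/T)(sup_{x∈X_I}V(x) + δ) for all k < k_G. Then there exists k ≤ T with x(k) ∈ X_G, and x(j) ∈ X for all j ≤ k. -/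
import Mathlib


theorem reach_certificate_sound {n : ℕ}
    (X XI XG : Set (Fin n → ℝ)) (V : (Fin n → ℝ) → ℝ) (δ : ℝ)
    (hIX : XI ⊆ X) (hGX : XG ⊆ X)
    (hIne : XI.Nonempty) (hbdd : BddAbove (V '' XI)) (hbddb : BddBelow (V '' XI))
    (hδ0 : 0 < δ) (hδ : δ > -sInf (V '' XI))
    (hinit : ∀ y ∈ XI, V y ≤ 0)
    (hout : ∀ y ∈ X \ XG, V y > -δ)
    (hdom : ∀ y, y ∉ X → V y > 0)
    (x : ℕ → (Fin n → ℝ)) (hx0 : x 0 ∈ XI)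
    (T : ℕ) (hT : 0 < T) (kG : ℕ)
    (hkG : (kG ≤ T ∧ V (x kG) ≤ -δ ∧ ∀ j < kG, ¬ V (x j) ≤ -δ) ∨
           (kG = T ∧ ∀ j ≤ T, ¬ V (x j) ≤ -δ))
    (hdec : ∀ k < kG,
      V (x (k + 1)) - V (x k) < -(1 / (T : ℝ)) * (sSup (V '' XI) + δ)) :
    ∃ k ≤ T, x k ∈ XG ∧ ∀ j ≤ k, x j ∈ X := by
  set S := sSup (V '' XI) with hS
  have hVx0S : V (x 0) ≤ S := le_csSup hbdd ⟨_, hx0, rfl⟩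
  have hSle : S ≤ 0 := csSup_le (hIne.image V)
    (by rintro v ⟨y, hy, rfl⟩; exact hinit y hy)
  have hSδ : 0 < S + δ := by
    have h1 : sInf (V '' XI) ≤ V (x 0) := csInf_le hbddb ⟨_, hx0, rfl⟩
    linarith
  have hT' : (0:ℝ) < T := by exact_mod_cast hT
  have key : ∀ j, j ≤ kG → V (x j) ≤ V (x 0) - j * ((1/(T:ℝ)) * (S + δ)) := by
    intro j
    induction j with
    | zero => intro _; simp
    | succ m ih =>
      intro hm
      have hmlt : m < kG := hm
      have h1 := ih (le_of_lt hmlt)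
      have h2 := hdec m hmlt
      push_cast
      nlinarith
  have hV0 : V (x 0) ≤ 0 := hinit _ hx0
  rcases hkG with ⟨hle, hVkG, _⟩ | ⟨hEq, hall⟩
  · refine ⟨kG, hle, ?_, ?_⟩
    · have hX : x kG ∈ X := by
        by_contra h
        have := hdom _ h
        linarith
      by_contra h
      have := hout _ ⟨hX, h⟩
      linarith
    · intro j hj
      have hVj : V (x j) ≤ 0 := by
        rcases eq_or_lt_of_le hj with rfl | hlt
        · linarith
        · have hk := key j hj
          have hj0 : (0:ℝ) ≤ (j:ℝ) := by positivity
          have hpos : (0:ℝ) ≤ (j:ℝ) * (1/(T:ℝ) * (S + δ)) :=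
            mul_nonneg hj0 (le_of_lt (mul_pos (by positivity) hSδ))
          linarith
      by_contra h
      have := hdom _ h
      linarith
  · exfalso
    have hk := key T (hEq ▸ le_rfl)
    have hcalc : (T:ℝ) * ((1/(T:ℝ)) * (S+δ)) = S + δ := by field_simp
    have : V (x T) ≤ -δ := by nlinarith
    exact hall T le_rfl this
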